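/- Assume every leaf of T is a variable node (equivalently, every check node of T has at least one child variable node). Then for every variable node p ∈ P there exists a minimal deviation x of T with x_p = 1. -/
import Mathlib


open SimpleGraph Finset

/-- In the tree `T` rooted at `n`, `v` is a child of `u`. -/
def IsChild {V : Type} (T : SimpleGraph V) (n u v : V) : Prop :=
  T.Adj u v ∧ T.dist v n = T.dist u n + 1

/-- A `T`-codeword: a map on the variable nodes `P` (encoded as a map on all vertices
vanishing off `P`) such that, at every check node, the sum of the values of its
variable neighbors is `0` in `ZMod 2`. -/
def IsCodeword {V : Type} (T : SimpleGraph V) [Fintype V] [DecidableRel T.Adj]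
    (P : Set V) (x : V → ZMod 2) : Prop :=
  (∀ v, v ∉ P → x v = 0) ∧
  ∀ q, q ∉ P → ∑ p ∈ T.neighborFinset q, x p = 0

/-- `x` covers `y` : every variable node where `y` is `1` also has `x` equal to `1`. -/
def Covers {V : Type} (P : Set V) (x y : V → ZMod 2) : Prop :=
  ∀ p ∈ P, y p = 1 → x p = 1

/-- A minimal deviation: a `T`-codeword `x` with `x n = 1` such that the only nonzero
`T`-codeword covered by `x` is `x` itself. -/
def IsMinimalDeviation {V : Type} (T : SimpleGraph V) [Fintype V] [DecidableRel T.Adj]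
    (P : Set V) (n : V) (x : V → ZMod 2) : Prop :=
  IsCodeword T P x ∧ x n = 1 ∧
  ∀ y, IsCodeword T P y → Covers P x y → y ≠ 0 → y = x

/-- The support of a `T`-codeword `x`: the variable nodes `p` with `x p = 1` together
with all check nodes adjacent to at least one such variable node. -/
def Support {V : Type} (T : SimpleGraph V) (P : Set V) (x : V → ZMod 2) : Set V :=
  {v | (v ∈ P ∧ x v = 1) ∨ (v ∉ P ∧ ∃ p ∈ P, T.Adj v p ∧ x p = 1)}

section AuxLemmas

variable {V : Type} [DecidableEq V] {T : SimpleGraph V}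

/-- The distance from a vertex on a walk to the endpoint is at most the walk length. -/
lemma aux_dist_le_of_mem_support {a b v : V} (w : T.Walk a b) (hv : v ∈ w.support) :
    T.dist v b ≤ w.length :=
  le_trans (SimpleGraph.dist_le (w.dropUntil v hv)) (SimpleGraph.Walk.length_dropUntil_le w hv)

/-- In a tree, the "parent" of a vertex (relative to any root `r`) is unique. -/
lemma aux_unique_parent (hT : T.IsTree) (r v u₁ u₂ : V)
    (h₁ : T.Adj v u₁) (h₂ : T.Adj v u₂)
    (d₁ : T.dist u₁ r + 1 = T.dist v r) (d₂ : T.dist u₂ r + 1 = T.dist v r) : u₁ = u₂ := by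
  obtain ⟨p₁, hp₁, hl₁⟩ := hT.isConnected.exists_path_of_dist u₁ r
  obtain ⟨p₂, hp₂, hl₂⟩ := hT.isConnected.exists_path_of_dist u₂ r
  have hv₁ : v ∉ p₁.support := by
    intro hv
    have := aux_dist_le_of_mem_support p₁ hv
    omega
  have hv₂ : v ∉ p₂.support := by
    intro hv
    have := aux_dist_le_of_mem_support p₂ hv
    omega
  have hq₁ : (SimpleGraph.Walk.cons h₁ p₁).IsPath := hp₁.cons hv₁
  have hq₂ : (SimpleGraph.Walk.cons h₂ p₂).IsPath := hp₂.cons hv₂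
  have heq : SimpleGraph.Walk.cons h₁ p₁ = SimpleGraph.Walk.cons h₂ p₂ :=
    (hT.existsUnique_path v r).unique hq₁ hq₂
  have hs := congrArg SimpleGraph.Walk.support heq
  rw [SimpleGraph.Walk.support_cons, SimpleGraph.Walk.support_cons,
    p₁.support_eq_cons, p₂.support_eq_cons, List.cons.injEq, List.cons.injEq] at hs
  exact hs.2.1

omit [DecidableEq V] in
/-- In a connected graph, every vertex other than `r` has a neighbor strictly closer
to `r`. -/
lemma aux_exists_parent (hconn : T.Connected) (r v : V) (hv : v ≠ r) :
    ∃ u, T.Adj v u ∧ T.dist u r + 1 = T.dist v r := by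
  have hdv : T.dist v r ≠ 0 := fun h => hv (hconn.dist_eq_zero_iff.mp h)
  obtain ⟨w, hw⟩ := hconn.exists_walk_length_eq_dist v r
  cases w with
  | nil =>
    simp only [SimpleGraph.Walk.length_nil] at hw
    omega
  | @cons _ u _ h w' =>
    rw [SimpleGraph.Walk.length_cons] at hw
    have h1 : T.dist u r ≤ w'.length := SimpleGraph.dist_le w'
    have h2 : T.dist v r ≤ T.dist u r + 1 := by
      obtain ⟨pw, hpw⟩ := hconn.exists_walk_length_eq_dist u r
      have := SimpleGraph.dist_le (SimpleGraph.Walk.cons h pw)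
      rw [SimpleGraph.Walk.length_cons, hpw] at this
      omega
    exact ⟨u, h, by omega⟩

end AuxLemmas

/-- assume every leaf of `T` is a variable node (equivalently, every
check node of `T` has at least one child variable node).  Then for every variable node
`p` there exists a minimal deviation `x` of `T` with `x p = 1`. -/
theorem exists_minimal_deviation_through {V : Type} [Fintype V]
    (T : SimpleGraph V) [DecidableRel T.Adj] (hT : T.IsTree)
    (P : Set V) (hbip : ∀ u v, T.Adj u v → (u ∈ P ↔ v ∉ P))
    (n : V) (hn : n ∈ P)
    (hleaf : ∀ q, q ∉ P → ∃ v, IsChild T n q v ∧ v ∈ P) :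
    ∀ p ∈ P, ∃ x, IsMinimalDeviation T P n x ∧ x p = 1 := by
  classical
  intro p hp
  have hconn := hT.isConnected
  have hparent : ∀ r v : V, v ≠ r → ∃ u, T.Adj v u ∧ T.dist u r + 1 = T.dist v r :=
    fun r v hv => aux_exists_parent hconn r v hv
  have huniqpar : ∀ r v u₁ u₂ : V, T.Adj v u₁ → T.Adj v u₂ →
      T.dist u₁ r + 1 = T.dist v r → T.dist u₂ r + 1 = T.dist v r → u₁ = u₂ :=
    fun r v u₁ u₂ => aux_unique_parent hT r v u₁ u₂
  have hd0 : ∀ v w : V, T.dist v w = 0 ↔ v = w := fun v w => hconn.dist_eq_zero_iff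
  have htri : ∀ a b c : V, T.dist a c ≤ T.dist a b + T.dist b c :=
    fun a b c => hconn.dist_triangle
  have hadj1 : ∀ a b : V, T.Adj a b → T.dist a b = 1 :=
    fun a b h => SimpleGraph.dist_eq_one_iff_adj.mpr h
  have hz : ∀ a : ZMod 2, a = 0 ∨ a = 1 := by decide
  -- parity: a vertex is a variable node iff its distance to the root is even
  have hpar : ∀ k, ∀ v : V, T.dist v n ≤ k → (v ∈ P ↔ Even (T.dist v n)) := by
    intro k
    induction k with
    | zero =>
      intro v hv
      have hvn : v = n := (hd0 v n).mp (Nat.le_zero.mp hv)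
      subst hvn
      simp [SimpleGraph.dist_self, hn]
    | succ k ih =>
      intro v hv
      by_cases hv0 : v = n
      · subst hv0; simp [SimpleGraph.dist_self, hn]
      · obtain ⟨u, hadj, hdu⟩ := hparent n v hv0
        rw [hbip v u hadj, ← hdu, Nat.even_add_one]
        exact not_congr (ih u (by omega))
  have hparity : ∀ v : V, v ∈ P ↔ Even (T.dist v n) := fun v => hpar (T.dist v n) v le_rfl
  -- adjacent vertices have distances to `n` differing by exactly one
  have hadjd : ∀ u v : V, T.Adj u v →
      T.dist u n + 1 = T.dist v n ∨ T.dist v n + 1 = T.dist u n := by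
    intro u v h
    have h1 : T.dist u n ≤ T.dist v n + 1 := by
      have := htri u v n
      rw [hadj1 u v h] at this
      omega
    have h2 : T.dist v n ≤ T.dist u n + 1 := by
      have := htri v u n
      rw [hadj1 v u h.symm] at this
      omega
    have hne : T.dist u n ≠ T.dist v n := by
      intro he
      have hb := hbip u v h
      rw [hparity u, hparity v, he] at hb
      tauto
    omega
  -- the choice of a distinguished child for every check node
  have hselex : ∀ q : V, ∃ w : V, q ∉ P → T.Adj q w ∧ w ∈ P ∧
      T.dist w n = T.dist q n + 1 ∧
      (T.dist q n + T.dist q p = T.dist n p → T.dist w p + 1 = T.dist q p) := by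
    intro q
    by_cases hqP : q ∉ P
    · by_cases honp : T.dist q n + T.dist q p = T.dist n p
      · -- `q` lies on the path from `n` to `p`: choose the child toward `p`
        have hqp : q ≠ p := fun he => hqP (he ▸ hp)
        obtain ⟨w, hadj, hdw⟩ := hparent p q hqp
        have hwP : w ∈ P := by
          have := hbip q w hadj
          tauto
        refine ⟨w, fun _ => ⟨hadj, hwP, ?_, fun _ => hdw⟩⟩
        have h1 : T.dist w n ≤ T.dist q n + 1 := by
          have := htri w q n
          rw [hadj1 w q hadj.symm] at this
          omega
        have h2 : T.dist n p ≤ T.dist n w + T.dist w p := htri n w p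
        have hc1 : T.dist n w = T.dist w n := SimpleGraph.dist_comm
        omega
      · obtain ⟨w, ⟨hadj, hdw⟩, hwP⟩ := hleaf q hqP
        exact ⟨w, fun _ => ⟨hadj, hwP, hdw, fun h => absurd h honp⟩⟩
    · exact ⟨q, fun h => absurd h hqP⟩
  choose sel hsel using hselex
  -- the set of selected variable nodes
  set S : V → Prop := fun v => Relation.ReflTransGen
    (fun u w => ∃ q, T.Adj u q ∧ T.dist q n = T.dist u n + 1 ∧ w = sel q) n v with hSdef
  have Sref : S n := Relation.ReflTransGen.refl
  have Stail : ∀ u w q : V, S u → T.Adj u q → T.dist q n = T.dist u n + 1 → w = sel q → S w := by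
    intro u w q hu h1 h2 h3
    exact Relation.ReflTransGen.tail hu ⟨q, h1, h2, h3⟩
  -- every selected node is a variable node
  have F1 : ∀ v, S v → v ∈ P := by
    intro v hv
    rw [hSdef] at hv
    induction hv with
    | refl => exact hn
    | tail _ hstep ih =>
      obtain ⟨q, hadj, hdq, rfl⟩ := hstep
      have hqP : q ∉ P := (hbip _ q hadj).mp ih
      exact (hsel q hqP).2.1
  -- structure of a selected node other than `n`
  have F2 : ∀ v, S v → v ≠ n → ∃ q u, q ∉ P ∧ T.Adj q v ∧ T.dist q n + 1 = T.dist v n ∧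
      v = sel q ∧ T.Adj u q ∧ T.dist u n + 1 = T.dist q n ∧ S u := by
    intro v hv hvn
    rw [hSdef] at hv
    rcases hv.cases_tail with h | ⟨u, hu, hstep⟩
    · exact absurd h hvn
    · obtain ⟨q, hadj, hdq, rfl⟩ := hstep
      have hSu : S u := hu
      have huP : u ∈ P := F1 u hSu
      have hqP : q ∉ P := (hbip u q hadj).mp huP
      obtain ⟨hcadj, hcP, hcd, _⟩ := hsel q hqP
      exact ⟨q, u, hqP, hcadj, by omega, rfl, hadj, by omega, hSu⟩
  -- classification of the selected neighbors of a check node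
  have key : ∀ q u w : V, q ∉ P → T.Adj q u → T.dist u n + 1 = T.dist q n →
      T.Adj q w → S w → (w = u ∨ (w = sel q ∧ S u)) := by
    intro q u w hqP hadjqu hdu hadjqw hSw
    rcases hadjd q w hadjqw with h | h
    · -- `w` is a child of `q`
      have hwn : w ≠ n := by
        intro he
        rw [he] at h
        simp [SimpleGraph.dist_self] at h
      obtain ⟨q', u', hq'P, hadj', hd', hw', hadju', hdu', hSu'⟩ := F2 w hSw hwn
      have hqq : q' = q := huniqpar n w q' q hadj'.symm hadjqw.symm hd' h
      subst hqq
      have huu : u' = u := huniqpar n q' u' u hadju'.symm hadjqu hdu' hdu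
      subst huu
      exact Or.inr ⟨hw', hSu'⟩
    · exact Or.inl (huniqpar n q w u hadjqw hadjqu h hdu)
  -- sums over the neighbors of a check node
  have sumlem : ∀ (q u : V), q ∉ P → T.Adj q u → T.dist u n + 1 = T.dist q n →
      ∀ f : V → ZMod 2, (∀ w, f w = 1 → S w) →
      ∑ w ∈ T.neighborFinset q, f w = f u + f (sel q) := by
    intro q u hqP hadjqu hdu f hf
    obtain ⟨hcadj, hcP, hcd, _⟩ := hsel q hqP
    have hne : u ≠ sel q := by
      intro he
      rw [← he] at hcd
      omega
    have hu_mem : u ∈ T.neighborFinset q := by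
      rw [SimpleGraph.mem_neighborFinset]; exact hadjqu
    have hs_mem : sel q ∈ T.neighborFinset q := by
      rw [SimpleGraph.mem_neighborFinset]; exact hcadj
    have hsub : ({u, sel q} : Finset V) ⊆ T.neighborFinset q :=
      Finset.insert_subset_iff.mpr ⟨hu_mem, Finset.singleton_subset_iff.mpr hs_mem⟩
    rw [← Finset.sum_subset hsub ?_, Finset.sum_pair hne]
    intro w hw hnw
    simp only [Finset.mem_insert, Finset.mem_singleton, not_or] at hnw
    rcases hz (f w) with h0 | h1
    · exact h0
    · have hSw := hf w h1
      have hadjqw := (T.mem_neighborFinset q w).mp hw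
      rcases key q u w hqP hadjqu hdu hadjqw hSw with h | h
      · exact absurd h hnw.1
      · exact absurd h.1 hnw.2
  -- the candidate codeword
  set x : V → ZMod 2 := fun v => if v ∈ P ∧ S v then 1 else 0 with hxdef
  have hx1 : ∀ v, v ∈ P → S v → x v = 1 := by
    intro v h1 h2
    simp only [hxdef]
    exact if_pos ⟨h1, h2⟩
  have hx0 : ∀ v, ¬(v ∈ P ∧ S v) → x v = 0 := by
    intro v h
    simp only [hxdef]
    exact if_neg h
  have hxS : ∀ v, x v = 1 → v ∈ P ∧ S v := by
    intro v h
    by_contra hc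
    rw [hx0 v hc] at h
    exact absurd h (by decide)
  -- `x` is a codeword
  have hxcw : IsCodeword T P x := by
    constructor
    · exact fun v hv => hx0 v (fun hc => hv hc.1)
    · intro q hqP
      have hqn : q ≠ n := fun h => hqP (h ▸ hn)
      obtain ⟨u, hadjqu, hdu⟩ := hparent n q hqn
      rw [sumlem q u hqP hadjqu hdu x (fun w hw => (hxS w hw).2)]
      obtain ⟨hcadj, hcP, hcd, _⟩ := hsel q hqP
      by_cases hSu : S u
      · have huP : u ∈ P := F1 u hSu
        have hselS : S (sel q) := Stail u (sel q) q hSu hadjqu.symm (by omega) rfl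
        rw [hx1 u huP hSu, hx1 (sel q) hcP hselS]
        decide
      · have hxu : x u = 0 := hx0 u (fun hc => hSu hc.2)
        have hxs : x (sel q) = 0 := by
          apply hx0
          rintro ⟨hP, hS⟩
          rcases key q u (sel q) hqP hadjqu hdu hcadj hS with he | ⟨_, hSu'⟩
          · rw [he] at hcd; omega
          · exact hSu hSu'
        rw [hxu, hxs]
        decide
  -- every variable node on the path from `n` to `p` is selected
  have honpath : ∀ k, ∀ v : V, T.dist v n ≤ k → v ∈ P →
      T.dist v n + T.dist v p = T.dist n p → S v := by
    intro k
    induction k with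
    | zero =>
      intro v h0 _ _
      have hvn : v = n := (hd0 v n).mp (Nat.le_zero.mp h0)
      subst hvn
      exact Sref
    | succ k ih =>
      intro v hvk hvP hvon
      by_cases hvn : v = n
      · subst hvn; exact Sref
      · obtain ⟨q, hadjvq, hdq⟩ := hparent n v hvn
        have hqP : q ∉ P := (hbip v q hadjvq).mp hvP
        have hqn : q ≠ n := fun h => hqP (h ▸ hn)
        obtain ⟨u, hadjqu, hdu⟩ := hparent n q hqn
        have huP : u ∈ P := by
          rw [hparity] at hvP ⊢
          obtain ⟨m, hm⟩ := hvP
          exact ⟨m - 1, by omega⟩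
        have h1 : T.dist q p ≤ T.dist v p + 1 := by
          have := htri q v p
          rw [hadj1 q v hadjvq.symm] at this
          omega
        have h2 : T.dist n p ≤ T.dist n q + T.dist q p := htri n q p
        have hc1 : T.dist n q = T.dist q n := SimpleGraph.dist_comm
        have hqon : T.dist q n + T.dist q p = T.dist n p := by omega
        have hqp : T.dist q p = T.dist v p + 1 := by omega
        have h3 : T.dist u p ≤ T.dist q p + 1 := by
          have := htri u q p
          rw [hadj1 u q hadjqu.symm] at this
          omega
        have h4 : T.dist n p ≤ T.dist n u + T.dist u p := htri n u p
        have hc2 : T.dist n u = T.dist u n := SimpleGraph.dist_comm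
        have huon : T.dist u n + T.dist u p = T.dist n p := by omega
        have hSu : S u := ih u (by omega) huP huon
        obtain ⟨hcadj, hcP, hcd, hcon⟩ := hsel q hqP
        have hveq : v = sel q :=
          huniqpar p q v (sel q) hadjvq.symm hcadj (by omega) (hcon hqon)
        exact Stail u v q hSu hadjqu.symm (by omega) hveq
  have hSp : S p := by
    apply honpath (T.dist p n) p le_rfl hp
    have : T.dist p p = 0 := by simp [SimpleGraph.dist_self]
    have hc : T.dist p n = T.dist n p := SimpleGraph.dist_comm
    omega
  refine ⟨x, ⟨hxcw, hx1 n hn Sref, ?_⟩, hx1 p hp hSp⟩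
  -- minimality
  intro y hycw hcov hyne
  obtain ⟨hy0, hyq⟩ := hycw
  have hy1 : ∀ w, y w = 1 → w ∈ P ∧ S w := by
    intro w hw
    have hwP : w ∈ P := by
      by_contra h
      rw [hy0 w h] at hw
      exact absurd hw (by decide)
    exact ⟨hwP, (hxS w (hcov w hwP hw)).2⟩
  -- propagate upward to the root
  have hup : ∀ k, ∀ v : V, T.dist v n ≤ k → y v = 1 → y n = 1 := by
    intro k
    induction k with
    | zero =>
      intro v h0 hv
      have hvn : v = n := (hd0 v n).mp (Nat.le_zero.mp h0)
      exact hvn ▸ hv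
    | succ k ih =>
      intro v hvk hyv
      by_cases hvn : v = n
      · exact hvn ▸ hyv
      · obtain ⟨hvP, hSv⟩ := hy1 v hyv
        obtain ⟨q, u, hqP, hadjqv, hdq, hveq, hadjuq, hdu, hSu⟩ := F2 v hSv hvn
        have hsum := hyq q hqP
        rw [sumlem q u hqP hadjuq.symm hdu y (fun w hw => (hy1 w hw).2),
          ← hveq, hyv] at hsum
        have hyu : y u = 1 := by
          rcases hz (y u) with h | h
          · rw [h] at hsum; exact absurd hsum (by decide)
          · exact h
        exact ih u (by omega) hyu
  have hyn : y n = 1 := by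
    obtain ⟨v, hv⟩ := Function.ne_iff.mp hyne
    simp only [Pi.zero_apply] at hv
    rcases hz (y v) with h | h
    · exact absurd h hv
    · exact hup (T.dist v n) v le_rfl h
  -- propagate downward through the selected set
  have hdown : ∀ v, S v → y v = 1 := by
    intro v hv
    rw [hSdef] at hv
    induction hv with
    | refl => exact hyn
    | @tail b c hrb hstep ih =>
      obtain ⟨q, hadjbq, hdq, rfl⟩ := hstep
      have hSb : S b := hrb
      have hqP : q ∉ P := (hbip b q hadjbq).mp (F1 b hSb)
      have hsum := hyq q hqP
      rw [sumlem q b hqP hadjbq.symm (by omega) y (fun w hw => (hy1 w hw).2), ih] at hsum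
      rcases hz (y (sel q)) with h | h
      · rw [h] at hsum; exact absurd hsum (by decide)
      · exact h
  funext v
  rcases hz (y v) with h | h
  · have hnc : ¬ (v ∈ P ∧ S v) := by
      rintro ⟨hvP, hSv⟩
      rw [hdown v hSv] at h
      exact absurd h (by decide)
    rw [h, hx0 v hnc]
  · obtain ⟨hvP, hSv⟩ := hy1 v h
    rw [h, hx1 v hvP hSv]
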